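/- Let M_R be an (σ,δ)-compatible module satisfying condition (*). If m(x) = Σ_{i=0}^p m_i x^i ∈ M[x;σ,δ] and f(x) = Σ_{j=0}^q a_j x^j ∈ R[x;σ,δ]\{0} satisfy m(x)f(x) = 0, then m_i a_q^{p+1} = 0 for all i = 0, 1, …, p. -/

import Mathlib

open MulOpposite

/-- `fw σ δ i j` is `f_i^j`, the sum of all words in `σ`, `δ` built with `i` factors of `σ`
and `j - i` factors of `δ`. -/
def fw {R : Type*} [Ring R] (σ δ : R → R) : ℕ → ℕ → R → R
  | 0, 0 => id
  | _ + 1, 0 => fun _ => 0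
  | 0, j + 1 => fun a => δ (fw σ δ 0 j a)
  | i + 1, j + 1 => fun a => σ (fw σ δ i j a) + δ (fw σ δ (i + 1) j a)

/-- Multiplication of the Ore extension `R[x;σ,δ]`, on coefficient sequences. -/
noncomputable def skewMul {R : Type*} [Ring R] (σ δ : R → R) (p q : ℕ →₀ R) : ℕ →₀ R :=
  p.sum fun j a => q.sum fun l b =>
    ∑ i ∈ Finset.range (j + 1), Finsupp.single (i + l) (a * fw σ δ i j b)

/-- The action of `R[x;σ,δ]` on the skew polynomial module `M[x;σ,δ]`, where `M` is a
right `R`-module (a module over `Rᵐᵒᵖ`): `(m x^j)·(b x^l) = Σ_{i≤j} (m·f_i^j(b)) x^{i+l}`. -/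
noncomputable def skewSMul {R : Type*} [Ring R] (σ δ : R → R) {M : Type*} [AddCommGroup M]
    [Module Rᵐᵒᵖ M] (m : ℕ →₀ M) (q : ℕ →₀ R) : ℕ →₀ M :=
  m.sum fun j mm => q.sum fun l b =>
    ∑ i ∈ Finset.range (j + 1), Finsupp.single (i + l) (op (fw σ δ i j b) • mm)

/-- A right `R`-module `M` is `(σ,δ)`-skew McCoy if whenever `m(x) g(x) = 0` in `M[x;σ,δ]`
with `g(x) ≠ 0`, there is a nonzero `a ∈ R` with `m(x) a = 0`. -/
def IsSkewMcCoy {R : Type*} [Ring R] (σ δ : R → R) (M : Type*) [AddCommGroup M]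
    [Module Rᵐᵒᵖ M] : Prop :=
  ∀ (m : ℕ →₀ M) (g : ℕ →₀ R), g ≠ 0 → skewSMul σ δ m g = 0 →
    ∃ a : R, a ≠ 0 ∧ skewSMul σ δ m (Finsupp.single 0 a) = 0

/-- A right `R`-module `M` is `(σ,δ)`-skew Armendariz if `m(x) g(x) = 0` implies
`(m_i x^i)(b_j x^j) = 0` for all `i, j`. -/
def IsSkewArmendariz {R : Type*} [Ring R] (σ δ : R → R) (M : Type*) [AddCommGroup M]
    [Module Rᵐᵒᵖ M] : Prop :=
  ∀ (m : ℕ →₀ M) (g : ℕ →₀ R), skewSMul σ δ m g = 0 →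
    ∀ i j, skewSMul σ δ (Finsupp.single i (m i)) (Finsupp.single j (g j)) = 0

/-- `σ`-compatibility of a right module: `m a = 0 ↔ m σ(a) = 0`. -/
def SigmaCompatible {R : Type*} [Ring R] (σ : R → R) (M : Type*) [AddCommGroup M]
    [Module Rᵐᵒᵖ M] : Prop :=
  ∀ (m : M) (a : R), op a • m = 0 ↔ op (σ a) • m = 0

/-- `δ`-compatibility of a right module: `m a = 0 → m δ(a) = 0`. -/
def DeltaCompatible {R : Type*} [Ring R] (δ : R → R) (M : Type*) [AddCommGroup M]
    [Module Rᵐᵒᵖ M] : Prop :=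
  ∀ (m : M) (a : R), op a • m = 0 → op (δ a) • m = 0

/-- A right module `M` is reduced if `m a = 0` implies `mR ∩ Ma = 0`. -/
def IsReducedModule {R : Type*} [Ring R] (M : Type*) [AddCommGroup M]
    [Module Rᵐᵒᵖ M] : Prop :=
  ∀ (m : M) (a : R), op a • m = 0 →
    ∀ x : M, (∃ r : R, op r • m = x) → (∃ m' : M, op a • m' = x) → x = 0

/-- Condition `(*)`: `m(x) f(x) = 0` implies `m(x) R f(x) = 0`. -/
def StarCondition {R : Type*} [Ring R] (σ δ : R → R) (M : Type*) [AddCommGroup M]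
    [Module Rᵐᵒᵖ M] : Prop :=
  ∀ (m : ℕ →₀ M) (f : ℕ →₀ R), skewSMul σ δ m f = 0 →
    ∀ r : R, skewSMul σ δ m (skewMul σ δ (Finsupp.single 0 r) f) = 0


section AuxLemmas
variable {R : Type*} [Ring R] (σ : R →+* R) (δ : R → R)

lemma fw_gt (hδ0 : δ 0 = 0) : ∀ j i, j < i → ∀ b, fw ⇑σ δ i j b = 0 := by
  intro j
  induction j with
  | zero =>
    intro i hi b
    match i, hi with
    | i + 1, _ => rfl
  | succ j ih =>
    intro i hi b
    match i, hi with
    | i + 1, hi =>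
      show σ (fw ⇑σ δ i j b) + δ (fw ⇑σ δ (i + 1) j b) = 0
      rw [ih i (by omega) b, ih (i + 1) (by omega) b, map_zero, hδ0, add_zero]

lemma fw_diag_succ (hδ0 : δ 0 = 0) (j : ℕ) (b : R) :
    fw ⇑σ δ (j + 1) (j + 1) b = σ (fw ⇑σ δ j j b) := by
  show σ _ + δ _ = _
  rw [fw_gt σ δ hδ0 j (j + 1) (Nat.lt_succ_self j) b, hδ0, add_zero]

variable {M : Type*} [AddCommGroup M] [Module Rᵐᵒᵖ M]

lemma compat_fw (hσ : SigmaCompatible ⇑σ M) (hδc : DeltaCompatible δ M) :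
    ∀ j i (b : R) (mm : M), op b • mm = 0 → op (fw ⇑σ δ i j b) • mm = 0 := by
  intro j
  induction j with
  | zero =>
    intro i b mm hb
    cases i with
    | zero => exact hb
    | succ i => show op (0 : R) • mm = 0; simp
  | succ j ih =>
    intro i b mm hb
    cases i with
    | zero => exact hδc _ _ (ih 0 b mm hb)
    | succ i =>
      show op (σ (fw ⇑σ δ i j b) + δ (fw ⇑σ δ (i + 1) j b)) • mm = 0
      rw [op_add, add_smul, (hσ _ _).mp (ih i b mm hb), hδc _ _ (ih (i + 1) b mm hb), add_zero]

lemma diag_cancel (hσ : SigmaCompatible ⇑σ M) (hδ0 : δ 0 = 0) :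
    ∀ j (b : R) (mm : M), op (fw ⇑σ δ j j b) • mm = 0 → op b • mm = 0 := by
  intro j
  induction j with
  | zero => intro b mm hb; exact hb
  | succ j ih =>
    intro b mm hb
    rw [fw_diag_succ σ δ hδ0] at hb
    exact ih b mm ((hσ _ _).mpr hb)

lemma skewSMul_apply (m : ℕ →₀ M) (g : ℕ →₀ R) (n : ℕ) :
    skewSMul ⇑σ δ m g n =
      ∑ j ∈ m.support, ∑ l ∈ g.support, ∑ i ∈ Finset.range (j + 1),
        if i + l = n then op (fw ⇑σ δ i j (g l)) • m j else 0 := by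
  simp only [skewSMul, Finsupp.sum_apply, Finsupp.sum, Finset.sum_apply',
    Finsupp.single_apply]

lemma skewMul_single_zero_apply (r : R) (f : ℕ →₀ R) (n : ℕ) :
    skewMul ⇑σ δ (Finsupp.single 0 r) f n = r * f n := by
  unfold skewMul
  rw [Finsupp.sum_single_index (by simp)]
  simp only [Finset.range_one, Finset.sum_singleton, Nat.zero_add, fw]
  rw [Finsupp.sum_apply]
  simp only [Finsupp.single_apply, id]
  rw [Finsupp.sum_ite_eq' f n (fun l b => r * b)]
  by_cases hn : n ∈ f.support
  · simp [hn]
  · simp [hn, Finsupp.notMem_support_iff.mp hn]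

end AuxLemmas

/-- Let `M_R` be `(σ,δ)`-compatible and satisfy condition `(*)`. If `m(x) f(x) = 0` with
`f(x) ≠ 0`, then `m_i a_q^{p+1} = 0` for all `i`, where `a_q` is the leading coefficient
of `f(x)` and `p` the degree of `m(x)`. -/
theorem compatible_star_leading {R : Type*} [Ring R] (σ : R →+* R) (δ : R → R)
    (hδadd : ∀ a b : R, δ (a + b) = δ a + δ b)
    (hδmul : ∀ a b : R, δ (a * b) = σ a * δ b + δ a * b)
    (M : Type*) [AddCommGroup M] [Module Rᵐᵒᵖ M]
    (hσ : SigmaCompatible ⇑σ M) (hδc : DeltaCompatible δ M)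
    (hstar : StarCondition ⇑σ δ M)
    (m : ℕ →₀ M) (f : ℕ →₀ R) (hf : f ≠ 0) (h : skewSMul ⇑σ δ m f = 0) :
    ∀ i : ℕ,
      op (f (f.support.max' (Finsupp.support_nonempty_iff.mpr hf)) ^
        (m.support.sup id + 1)) • m i = 0 := by
  classical
  have hδ0 : δ 0 = 0 := by
    have h0 := hδadd 0 0
    rw [add_zero] at h0
    exact (left_eq_add.mp h0)
  set p := m.support.sup id with hp
  set q := f.support.max' (Finsupp.support_nonempty_iff.mpr hf) with hq
  set a := f q with ha
  have key : ∀ k, ∀ j, p < j + k → op (a ^ k) • m j = 0 := by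
    intro k
    induction k with
    | zero =>
      intro j hj
      have hm : m j = 0 := by
        by_contra hmj
        have hjs : j ∈ m.support := Finsupp.mem_support_iff.mpr hmj
        have := Finset.le_sup (f := id) hjs
        simp only [id] at this
        omega
      simp [hm]
    | succ k ih =>
      intro j hj
      rcases Nat.lt_or_ge p (j + k) with hlt | hge
      · have h1 := ih j hlt
        rw [pow_succ, op_mul, mul_smul, h1, smul_zero]
      · have heq : p = j + k := by omega
        by_cases hmj : m j = 0
        · simp [hmj]
        by_cases hak : a ^ (k + 1) = 0
        · simp [hak]
        have hg := hstar m f h (a ^ k)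
        set g := skewMul ⇑σ δ (Finsupp.single 0 (a ^ k)) f with hgdef
        have hgl : ∀ l, g l = a ^ k * f l := fun l =>
          skewMul_single_zero_apply σ δ (a ^ k) f l
        have hgq : g q = a ^ (k + 1) := by rw [hgl q, ← ha, ← pow_succ]
        have hn : skewSMul ⇑σ δ m g (j + q) = 0 := by rw [hg]; rfl
        rw [skewSMul_apply] at hn
        have hjmem : j ∈ m.support := Finsupp.mem_support_iff.mpr hmj
        have hqmem : q ∈ g.support := by
          rw [Finsupp.mem_support_iff, hgq]; exact hak
        have hlq : ∀ l ∈ g.support, l ≤ q := by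
          intro l hl
          apply Finset.le_max'
          rw [Finsupp.mem_support_iff]
          intro hfl
          apply Finsupp.mem_support_iff.mp hl
          rw [hgl, hfl, mul_zero]
        have main : (∑ j' ∈ m.support, ∑ l ∈ g.support, ∑ i ∈ Finset.range (j' + 1),
            if i + l = j + q then op (fw ⇑σ δ i j' (g l)) • m j' else 0)
            = op (fw ⇑σ δ j j (g q)) • m j := by
          rw [Finset.sum_eq_single_of_mem j hjmem ?_]
          · rw [Finset.sum_eq_single_of_mem q hqmem ?_]
            · rw [Finset.sum_eq_single_of_mem j (Finset.self_mem_range_succ j) ?_]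
              · simp
              · intro i _ hij
                have : i + q ≠ j + q := by omega
                simp [this, hij]
            · intro l hl hlq'
              apply Finset.sum_eq_zero
              intro i hi
              have hle := hlq l hl
              have hij : i ≤ j := Nat.lt_succ_iff.mp (Finset.mem_range.mp hi)
              have : i + l ≠ j + q := by omega
              simp [this]
          · intro j' hj' hjj'
            rcases lt_or_gt_of_ne hjj' with hltj | hgtj
            · apply Finset.sum_eq_zero; intro l hl
              apply Finset.sum_eq_zero; intro i hi
              have h1 : i ≤ j' := Nat.lt_succ_iff.mp (Finset.mem_range.mp hi)
              have h2 := hlq l hl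
              have : i + l ≠ j + q := by omega
              simp [this]
            · apply Finset.sum_eq_zero; intro l hl
              apply Finset.sum_eq_zero; intro i hi
              have hkill : op (g l) • m j' = 0 := by
                rw [hgl, op_mul, mul_smul, ih j' (by omega), smul_zero]
              rw [compat_fw σ δ hσ hδc j' i (g l) (m j') hkill]
              simp
        rw [main, hgq] at hn
        exact diag_cancel σ δ hσ hδ0 j (a ^ (k + 1)) (m j) hn
  intro i
  exact key (p + 1) i (by omega)
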